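/- Let D be a finite-dimensional graded division algebra over an algebraically closed field F, graded by an abelian group G with support T, and suppose D is semisimple as an ungraded algebra, with center K (a graded field with support H ⊆ T). Then H is precisely the radical of the alternating bicharacter β: T × T → F^× defined by X_s X_t = β(s,t) X_t X_s, and the simple components D₁, ..., D_k of D (k = |H|) are pairwise isomorphic as G/H-graded algebras, each a graded division algebra whose commutation bicharacter is the nondegenerate bicharacter β̄ induced by β on T/H. -/

import Mathlib

set_option linter.unusedSectionVars false
set_option maxHeartbeats 1000000

lemma exists_algHom_idem {F : Type*} [Field F] [IsAlgClosed F] (Z : Type*) [CommRing Z]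
    [Algebra F Z] [FiniteDimensional F Z] (e : Z) (he : e * e = e) (hne : e ≠ 0) :
    ∃ l : Z →ₐ[F] F, l e = 1 := by
  have h1 : (1 : Z) ∉ Ideal.span {1 - e} := by
    intro h
    obtain ⟨a, ha⟩ := Ideal.mem_span_singleton'.mp h
    apply hne
    have : e = a * (1 - e) * e := by rw [ha, one_mul]
    rw [mul_assoc, sub_mul, one_mul, he, sub_self, mul_zero] at this
    exact this
  obtain ⟨m, hm, hIm⟩ := Ideal.exists_le_maximal _ ((Ideal.ne_top_iff_one _).mpr h1)
  letI : Field (Z ⧸ m) := Ideal.Quotient.field m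
  have hsurj : Function.Surjective (algebraMap F (Z ⧸ m)) :=
    IsAlgClosed.algebraMap_bijective_of_isIntegral.2
  have hbij : Function.Bijective (Algebra.ofId F (Z ⧸ m)) :=
    ⟨(algebraMap F (Z ⧸ m)).injective, hsurj⟩
  let E := AlgEquiv.ofBijective (Algebra.ofId F (Z ⧸ m)) hbij
  refine ⟨(E.symm : (Z ⧸ m) →ₐ[F] F).comp (Ideal.Quotient.mkₐ F m), ?_⟩
  have h1e : Ideal.Quotient.mkₐ F m (1 - e) = 0 :=
    (Ideal.Quotient.eq_zero_iff_mem).mpr (hIm (Ideal.subset_span rfl))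
  have : Ideal.Quotient.mkₐ F m e = 1 := by
    have := h1e
    rw [map_sub, map_one, sub_eq_zero] at this
    exact this.symm
  simp only [AlgHom.coe_comp, Function.comp_apply, this, map_one]

noncomputable instance unitsRootableNat (F : Type*) [Field F] [IsAlgClosed F] :
    RootableBy Fˣ ℕ :=
  rootableByOfPowLeftSurj _ _ (fun {n} hn x => by
    obtain ⟨z, hz⟩ := IsAlgClosed.exists_pow_nat_eq (x : F) (Nat.pos_of_ne_zero hn)
    have hz0 : z ≠ 0 := by
      intro h; rw [h, zero_pow hn] at hz; exact x.ne_zero hz.symm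
    exact ⟨Units.mk0 z hz0, Units.ext (by simp [hz])⟩)

noncomputable instance unitsRootableInt (F : Type*) [Field F] [IsAlgClosed F] :
    RootableBy Fˣ ℤ := Group.rootableByIntOfRootableByNat Fˣ

noncomputable instance unitsDivisible (F : Type*) [Field F] [IsAlgClosed F] :
    DivisibleBy (Additive Fˣ) ℤ where
  div a n := Additive.ofMul (RootableBy.root a.toMul n)
  div_zero a := congrArg Additive.ofMul (RootableBy.root_zero a.toMul)
  div_cancel {n} a hn := by
    change n • Additive.ofMul (RootableBy.root a.toMul n) = a
    rw [← ofMul_zpow, RootableBy.root_cancel _ hn]; rfl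

lemma exists_char_extension {F : Type*} [Field F] [IsAlgClosed F] {T : Type*} [CommGroup T]
    (H : Subgroup T) (χ₀ : H →* Fˣ) : ∃ χ : T →* Fˣ, ∀ h : H, χ h = χ₀ h := by
  have baer : Module.Baer ℤ (Additive Fˣ) := Module.Baer.of_divisible _
  have hinj : Function.Injective (MonoidHom.toAdditive H.subtype) := by
    intro a b hab
    exact Subtype.ext (congrArg Additive.toMul hab : _)
  obtain ⟨h, hcomp⟩ := baer.extension_property_addMonoidHom
    (MonoidHom.toAdditive H.subtype) hinj (MonoidHom.toAdditive χ₀)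
  refine ⟨MonoidHom.toAdditive.symm h, fun a => ?_⟩
  have := DFunLike.congr_fun hcomp (Additive.ofMul a)
  exact congrArg Additive.toMul this

section
variable {F : Type*} [Field F] {T : Type*} [CommGroup T] [Fintype T]
    {D : Type*} [Ring D] [Algebra F D] [FiniteDimensional F D]
    (τ : T → T → Fˣ) (X : T → D) (b : Module.Basis T F D) (hb : ∀ t, b t = X t)
    (hmul : ∀ s t : T, X s * X t = (τ s t : F) • X (s * t))

include hb in
lemma X_ne_zero (t : T) : X t ≠ 0 := hb t ▸ b.ne_zero t

include hb in
lemma smul_X_cancel {c c' : F} {t : T} (h : c • X t = c' • X t) : c = c' := by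
  by_contra hne
  have : (c - c') • X t = 0 := by rw [sub_smul, h, sub_self]
  rcases smul_eq_zero.mp this with h' | h'
  · exact hne (sub_eq_zero.mp h')
  · exact X_ne_zero X b hb t h'

include hb hmul in
lemma cocycle (s t u : T) : (τ s t : F) * τ (s * t) u = τ t u * τ s (t * u) := by
  have h1 : (X s * X t) * X u = ((τ s t : F) * τ (s * t) u) • X (s * t * u) := by
    rw [hmul, smul_mul_assoc, hmul, smul_smul]
  have h2 : X s * (X t * X u) = ((τ t u : F) * τ s (t * u)) • X (s * t * u) := by
    rw [hmul, mul_smul_comm, hmul, smul_smul, mul_assoc s t u, mul_comm (τ t u : F)]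
  exact smul_X_cancel X b hb (by rw [← h1, ← h2, mul_assoc])

include hb hmul in
lemma tau_one_left (t : T) : τ 1 t = τ 1 1 := by
  have h := cocycle τ X b hb hmul 1 1 t
  rw [one_mul, one_mul] at h
  exact (Units.ext (mul_right_cancel₀ (Units.ne_zero (τ 1 t)) h.symm))

include hb hmul in
lemma tau_one_right (t : T) : τ t 1 = τ 1 1 := by
  have h := cocycle τ X b hb hmul t 1 1
  rw [mul_one, mul_one] at h
  exact Units.ext (mul_right_cancel₀ (Units.ne_zero (τ t 1)) h)

include hb hmul in
lemma X_one_eq : X 1 = (τ 1 1 : F) • 1 := by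
  have key : ∀ d : D, d * ((τ 1 1 : F)⁻¹ • X 1) = d := by
    have : LinearMap.mulRight F ((τ 1 1 : F)⁻¹ • X 1) = LinearMap.id := by
      refine b.ext fun t => ?_
      simp only [LinearMap.mulRight_apply, LinearMap.id_coe, id_eq, hb]
      have ht : (τ t 1 : F) = τ 1 1 := congrArg Units.val (tau_one_right τ X b hb hmul t)
      rw [mul_smul_comm, hmul, mul_one, ht, smul_smul,
        inv_mul_cancel₀ (Units.ne_zero (τ 1 1)), one_smul]
    intro d
    have := congrArg (fun f => f d) this
    simpa using this
  have h1 : ((τ 1 1 : F)⁻¹ • X 1) = 1 := by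
    have := key 1
    rwa [one_mul] at this
  rw [← h1, smul_smul, mul_inv_cancel₀ (Units.ne_zero (τ 1 1)), one_smul]

include hb hmul in
lemma center_iff (t : T) :
    X t ∈ Subalgebra.center F D ↔ ∀ s : T, τ t s = τ s t := by
  constructor
  · intro h s
    have := (Subalgebra.mem_center_iff.mp h) (X s)
    rw [hmul, hmul, mul_comm s t] at this
    exact Units.ext (smul_X_cancel X b hb this.symm)
  · intro h
    rw [Subalgebra.mem_center_iff]
    have : LinearMap.mulLeft F (X t) = LinearMap.mulRight F (X t) := by
      refine b.ext fun s => ?_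
      simp only [LinearMap.mulLeft_apply, LinearMap.mulRight_apply, hb]
      rw [hmul, hmul, mul_comm s t, h s]
    intro d
    have := congrArg (fun f => f d) this
    simpa using this.symm

include hb in
lemma coeff_eq {A B : T → F} (h : ∑ u, A u • X u = ∑ u, B u • X u) : ∀ u, A u = B u := by
  have h' : ∑ u, (A u - B u) • b u = 0 := by
    simp only [sub_smul, Finset.sum_sub_distrib, hb, h, sub_self]
  intro u
  have := Fintype.linearIndependent_iff.mp b.linearIndependent _ h' u
  exact sub_eq_zero.mp this

include hb hmul in
lemma central_coeff {z : D} (hz : z ∈ Subalgebra.center F D) {t : T}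
    (ht : b.repr z t ≠ 0) : X t ∈ Subalgebra.center F D := by
  rw [center_iff τ X b hb hmul]
  intro s
  set c : T → F := fun u => b.repr z u with hc
  have hzexp : (∑ u, c u • X u) = z := by
    simpa only [hb] using b.sum_repr z
  have hcomm : X s * z = z * X s := Subalgebra.mem_center_iff.mp hz (X s)
  have hL : z * X s = ∑ v, (c (v * s⁻¹) * τ (v * s⁻¹) s) • X v := by
    rw [← hzexp, Finset.sum_mul]
    refine Fintype.sum_equiv (Equiv.mulRight s) _ _ fun u => ?_
    simp only [Equiv.coe_mulRight, mul_inv_cancel_right]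
    rw [smul_mul_assoc, hmul, smul_smul]
  have hR : X s * z = ∑ v, (c (v * s⁻¹) * τ s (v * s⁻¹)) • X v := by
    rw [← hzexp, Finset.mul_sum]
    refine Fintype.sum_equiv (Equiv.mulRight s) _ _ fun u => ?_
    simp only [Equiv.coe_mulRight, mul_inv_cancel_right]
    rw [mul_smul_comm, hmul, smul_smul, mul_comm s u]
  have heq : (∑ v, (c (v * s⁻¹) * τ (v * s⁻¹) s) • X v)
      = ∑ v, (c (v * s⁻¹) * τ s (v * s⁻¹)) • X v := by
    rw [← hL, ← hR]; exact hcomm.symm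
  have key := coeff_eq X b hb heq (t * s)
  simp only [mul_inv_cancel_right] at key
  exact Units.ext (mul_left_cancel₀ ht key)

include hb hmul in
lemma tau_inv_symm (t : T) : τ t t⁻¹ = τ t⁻¹ t := by
  have h := cocycle τ X b hb hmul t t⁻¹ t
  rw [mul_inv_cancel, inv_mul_cancel] at h
  have h1 : (τ 1 t : F) = τ 1 1 := congrArg Units.val (tau_one_left τ X b hb hmul t)
  have h2 : (τ t 1 : F) = τ 1 1 := congrArg Units.val (tau_one_right τ X b hb hmul t)
  rw [h1, h2] at h
  exact Units.ext (mul_right_cancel₀ (Units.ne_zero (τ 1 1)) h)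

include hb hmul in
lemma X_inv_right (t : T) : X t * ((((τ t t⁻¹ : F)) * (τ 1 1 : F))⁻¹ • X t⁻¹) = 1 := by
  have hne : ((τ t t⁻¹ : F)) * (τ 1 1 : F) ≠ 0 :=
    mul_ne_zero (Units.ne_zero _) (Units.ne_zero _)
  rw [mul_smul_comm, hmul, mul_inv_cancel, X_one_eq τ X b hb hmul, smul_smul, smul_smul,
    mul_assoc, inv_mul_cancel₀ hne, one_smul]

include hb hmul in
lemma X_inv_left (t : T) : ((((τ t t⁻¹ : F)) * (τ 1 1 : F))⁻¹ • X t⁻¹) * X t = 1 := by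
  have hne : ((τ t t⁻¹ : F)) * (τ 1 1 : F) ≠ 0 :=
    mul_ne_zero (Units.ne_zero _) (Units.ne_zero _)
  have hsym : (τ t⁻¹ t : F) = τ t t⁻¹ := (congrArg Units.val (tau_inv_symm τ X b hb hmul t)).symm
  rw [smul_mul_assoc, hmul, inv_mul_cancel, X_one_eq τ X b hb hmul, smul_smul, smul_smul,
    hsym, mul_assoc, inv_mul_cancel₀ hne, one_smul]

include hb hmul in
lemma center_one_mem : X (1 : T) ∈ Subalgebra.center F D := by
  rw [X_one_eq τ X b hb hmul]
  exact Subalgebra.smul_mem _ (one_mem _) _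

include hb hmul in
lemma center_mul_mem {s t : T} (hs : X s ∈ Subalgebra.center F D)
    (ht : X t ∈ Subalgebra.center F D) : X (s * t) ∈ Subalgebra.center F D := by
  have : X (s * t) = (τ s t : F)⁻¹ • (X s * X t) := by
    rw [hmul, smul_smul, inv_mul_cancel₀ (Units.ne_zero _), one_smul]
  rw [this]
  exact Subalgebra.smul_mem _ (mul_mem hs ht) _

include hb hmul in
lemma center_inv_mem {t : T} (ht : X t ∈ Subalgebra.center F D) :
    X t⁻¹ ∈ Subalgebra.center F D := by
  set u : D := (((τ t t⁻¹ : F)) * (τ 1 1 : F))⁻¹ • X t⁻¹ with hu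
  have h1 : X t * u = 1 := X_inv_right τ X b hb hmul t
  have h2 : u * X t = 1 := X_inv_left τ X b hb hmul t
  have hmemu : u ∈ Subalgebra.center F D := by
    rw [Subalgebra.mem_center_iff]
    intro d
    have hc : X t * d = d * X t := (Subalgebra.mem_center_iff.mp ht d).symm
    calc d * u = (u * X t) * d * u := by rw [h2, one_mul]
      _ = u * (X t * d) * u := by rw [mul_assoc u (X t) d]
      _ = u * (d * X t) * u := by rw [hc]
      _ = (u * d) * (X t * u) := by rw [← mul_assoc u d (X t), mul_assoc (u * d) (X t) u]
      _ = u * d := by rw [h1, mul_one]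
  have : X t⁻¹ = (((τ t t⁻¹ : F)) * (τ 1 1 : F)) • u := by
    rw [hu, smul_smul, mul_inv_cancel₀ (mul_ne_zero (Units.ne_zero _) (Units.ne_zero _)),
      one_smul]
  rw [this]
  exact Subalgebra.smul_mem _ hmemu _

/-- The graded automorphism attached to a character. -/
noncomputable def sigmaChi (χ : T →* Fˣ) : D ≃ₗ[F] D :=
  LinearEquiv.ofLinear (b.constr F fun t => (χ t : F) • X t)
    (b.constr F fun t => ((χ t : F))⁻¹ • X t)
    (by
      refine b.ext fun t => ?_
      simp only [LinearMap.coe_comp, Function.comp_apply, Module.Basis.constr_basis, LinearMap.id_coe,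
        id_eq, map_smul]
      rw [← hb t, Module.Basis.constr_basis, hb t, smul_smul,
        inv_mul_cancel₀ (Units.ne_zero (χ t)), one_smul])
    (by
      refine b.ext fun t => ?_
      simp only [LinearMap.coe_comp, Function.comp_apply, Module.Basis.constr_basis, LinearMap.id_coe,
        id_eq, map_smul]
      rw [← hb t, Module.Basis.constr_basis, hb t, smul_smul,
        mul_inv_cancel₀ (Units.ne_zero (χ t)), one_smul])

lemma sigmaChi_apply (χ : T →* Fˣ) (t : T) : sigmaChi X b hb χ (X t) = (χ t : F) • X t := by
  conv_lhs => rw [← hb t]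
  show ((b.constr F) fun t => (χ t : F) • X t) (b t) = (χ t : F) • X t
  exact b.constr_basis F _ t

include hmul in
lemma sigmaChi_one (χ : T →* Fˣ) : sigmaChi X b hb χ 1 = 1 := by
  have h1 : (1 : D) = ((τ 1 1 : F))⁻¹ • X 1 := by
    rw [X_one_eq τ X b hb hmul]
    rw [smul_smul]
    rw [inv_mul_cancel₀ (Units.ne_zero (τ 1 1))]
    rw [one_smul]
  rw [h1, map_smul, sigmaChi_apply X b hb, map_one, Units.val_one, one_smul]

include hmul in
lemma sigmaChi_mul (χ : T →* Fˣ) (x y : D) :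
    sigmaChi X b hb χ (x * y) = sigmaChi X b hb χ x * sigmaChi X b hb χ y := by
  have key : (LinearMap.mul F D).compr₂ (sigmaChi X b hb χ).toLinearMap
      = (LinearMap.mul F D).compl₁₂ (sigmaChi X b hb χ).toLinearMap
          (sigmaChi X b hb χ).toLinearMap := by
    refine b.ext fun s => ?_
    refine b.ext fun t => ?_
    simp only [LinearMap.compr₂_apply, LinearMap.compl₁₂_apply, LinearMap.mul_apply',
      LinearEquiv.coe_toLinearMap, hb]
    rw [hmul, map_smul, sigmaChi_apply X b hb, sigmaChi_apply X b hb, sigmaChi_apply X b hb,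
      smul_mul_assoc, mul_smul_comm, hmul, map_mul, Units.val_mul, smul_smul, smul_smul,
      smul_smul]
    ring_nf
  have := LinearMap.congr_fun (LinearMap.congr_fun key x) y
  simpa using this

/-- The graded automorphism as an algebra equivalence. -/
noncomputable def sigmaChiAlg (χ : T →* Fˣ) : D ≃ₐ[F] D :=
  AlgEquiv.ofLinearEquiv (sigmaChi X b hb χ) (sigmaChi_one τ X b hb hmul χ)
    (sigmaChi_mul τ X b hb hmul χ)

lemma sigmaChiAlg_apply (χ : T →* Fˣ) (t : T) :
    sigmaChiAlg τ X b hb hmul χ (X t) = (χ t : F) • X t := sigmaChi_apply X b hb χ t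

variable [IsAlgClosed F]

include hb hmul in
lemma sigma_center {z : D} (hz : z ∈ Subalgebra.center F D)
    (σ : D ≃ₐ[F] D) : σ z ∈ Subalgebra.center F D := by
  rw [Subalgebra.mem_center_iff]
  intro d
  have h1 : σ.symm d * z = z * σ.symm d := Subalgebra.mem_center_iff.mp hz (σ.symm d)
  calc d * σ z = σ (σ.symm d) * σ z := by rw [AlgEquiv.apply_symm_apply]
    _ = σ (σ.symm d * z) := by rw [map_mul]
    _ = σ (z * σ.symm d) := by rw [h1]
    _ = σ z * d := by rw [map_mul, AlgEquiv.apply_symm_apply]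

include hb hmul in
lemma main3 (e f : D)
    (he : e ∈ Subalgebra.center F D ∧ IsIdempotentElem e ∧ e ≠ 0 ∧
          ∀ e' : D, e' ∈ Subalgebra.center F D → IsIdempotentElem e' →
            e' * e = e' → e' = 0 ∨ e' = e)
    (hf : f ∈ Subalgebra.center F D ∧ IsIdempotentElem f ∧ f ≠ 0 ∧
          ∀ f' : D, f' ∈ Subalgebra.center F D → IsIdempotentElem f' →
            f' * f = f' → f' = 0 ∨ f' = f) :
    ∃ σ : D ≃ₐ[F] D, σ e = f ∧
      ∀ t : T, Submodule.map σ.toLinearMap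
          (Submodule.span F {d : D | ∃ s : T,
            X (s * t⁻¹) ∈ Subalgebra.center F D ∧ ∃ c : F, d = c • X s})
        = Submodule.span F {d : D | ∃ s : T,
            X (s * t⁻¹) ∈ Subalgebra.center F D ∧ ∃ c : F, d = c • X s} := by
  classical
  obtain ⟨heZ, heI, heN, heM⟩ := he
  obtain ⟨hfZ, hfI, hfN, hfM⟩ := hf
  set Z := Subalgebra.center F D with hZdef
  -- algebra homs
  obtain ⟨le, hle⟩ := exists_algHom_idem (F := F) Z ⟨e, heZ⟩
    (Subtype.ext heI) (fun h => heN (congrArg Subtype.val h))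
  obtain ⟨lf, hlf⟩ := exists_algHom_idem (F := F) Z ⟨f, hfZ⟩
    (Subtype.ext hfI) (fun h => hfN (congrArg Subtype.val h))
  -- the subgroup of central support
  let Hs : Subgroup T :=
    { carrier := {t | X t ∈ Z}
      one_mem' := center_one_mem τ X b hb hmul
      mul_mem' := fun ha hb' => center_mul_mem τ X b hb hmul ha hb'
      inv_mem' := fun ha => center_inv_mem τ X b hb hmul ha }
  -- central basis vectors as elements of Z
  let W : T → Z := fun t => if h : X t ∈ Z then ⟨X t, h⟩ else 0
  have hW : ∀ (t) (h : X t ∈ Z), W t = ⟨X t, h⟩ := fun t h => dif_pos h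
  have hW0 : ∀ (t), X t ∉ Z → W t = 0 := fun t h => dif_neg h
  have hWmul : ∀ s t, X s ∈ Z → X t ∈ Z → W s * W t = (τ s t : F) • W (s * t) := by
    intro s t hs ht
    rw [hW s hs, hW t ht, hW (s * t) (center_mul_mem τ X b hb hmul hs ht)]
    exact Subtype.ext (hmul s t)
  have hW1 : W 1 = (τ 1 1 : F) • (1 : Z) := by
    rw [hW 1 (center_one_mem τ X b hb hmul)]
    exact Subtype.ext (X_one_eq τ X b hb hmul)
  -- values of algebra homs on W t are nonzero
  have hρ : ∀ (l : Z →ₐ[F] F) (t), X t ∈ Z → l (W t) ≠ 0 := by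
    intro l t ht h0
    have hinv : X t⁻¹ ∈ Z := center_inv_mem τ X b hb hmul ht
    have h1 : W t * W t⁻¹ = (τ t t⁻¹ : F) • W (t * t⁻¹) := hWmul t t⁻¹ ht hinv
    rw [mul_inv_cancel, hW1, smul_smul] at h1
    have h2 := congrArg l h1
    rw [map_mul, h0, zero_mul, map_smul, map_one, smul_eq_mul, mul_one] at h2
    exact mul_ne_zero (Units.ne_zero (τ t t⁻¹)) (Units.ne_zero (τ 1 1)) h2.symm
  -- value at 1
  have hl1 : ∀ (l : Z →ₐ[F] F), l (W 1) = (τ 1 1 : F) := by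
    intro l
    rw [hW1, map_smul, map_one, smul_eq_mul, mul_one]
  -- the character on Hs
  have hmulρ : ∀ (l : Z →ₐ[F] F) (s t : T), X s ∈ Z → X t ∈ Z →
      l (W s) * l (W t) = (τ s t : F) * l (W (s * t)) := by
    intro l s t hs ht
    rw [← map_mul, hWmul s t hs ht, map_smul, smul_eq_mul]
  let χ₀ : Hs →* Fˣ :=
    { toFun := fun h => Units.mk0 (le (W h) * (lf (W h))⁻¹)
        (mul_ne_zero (hρ le h h.2) (inv_ne_zero (hρ lf h h.2)))
      map_one' := by
        refine Units.ext ?_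
        have : le (W (1 : Hs)) = (τ 1 1 : F) := hl1 le
        have h2 : lf (W (1 : Hs)) = (τ 1 1 : F) := hl1 lf
        simp only [Units.val_mk0, Units.val_one]
        rw [show ((1 : Hs) : T) = (1 : T) from rfl, hl1 le, hl1 lf]
        exact mul_inv_cancel₀ (Units.ne_zero (τ 1 1))
      map_mul' := by
        intro a c
        refine Units.ext ?_
        simp only [Units.val_mk0, Units.val_mul]
        have ha := a.2
        have hc := c.2
        have hac : ((a * c : Hs) : T) = (a : T) * (c : T) := rfl
        have h1 : le (W ((a : T) * c)) = (τ (a : T) c : F)⁻¹ * (le (W a) * le (W c)) := by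
          rw [hmulρ le a c ha hc, ← mul_assoc,
            inv_mul_cancel₀ (Units.ne_zero (τ (a : T) c)), one_mul]
        have h2 : lf (W ((a : T) * c)) = (τ (a : T) c : F)⁻¹ * (lf (W a) * lf (W c)) := by
          rw [hmulρ lf a c ha hc, ← mul_assoc,
            inv_mul_cancel₀ (Units.ne_zero (τ (a : T) c)), one_mul]
        rw [hac, h1, h2]
        have hfa := hρ lf a ha
        have hfc := hρ lf c hc
        have htau := Units.ne_zero (τ (a : T) c)
        field_simp }
  obtain ⟨χ, hχ⟩ := exists_char_extension Hs χ₀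
  have hχkey : ∀ (t : T) (ht : X t ∈ Z), (χ t : F) * lf (W t) = le (W t) := by
    intro t ht
    have h0 := congrArg Units.val (hχ ⟨t, ht⟩)
    simp only [Units.val_mk0, χ₀] at h0
    have h0' : (χ t : F) = le (W t) * (lf (W t))⁻¹ := h0
    rw [h0', mul_assoc, inv_mul_cancel₀ (hρ lf t ht), mul_one]
  set σ : D ≃ₐ[F] D := sigmaChiAlg τ X b hb hmul χ with hσdef
  have hσX : ∀ t, σ (X t) = (χ t : F) • X t := fun t => sigmaChiAlg_apply τ X b hb hmul χ t
  -- decomposition of central elements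
  have hsum : ∀ (c : T → F), (∀ t, X t ∉ Z → c t = 0) → ∀ (z : D) (hz : z ∈ Z),
      z = ∑ t, c t • X t → (⟨z, hz⟩ : Z) = ∑ t, c t • W t := by
    intro c hc z hz hzc
    apply Subtype.ext
    rw [AddSubmonoidClass.coe_finset_sum]
    show z = ∑ t, ((c t • W t : Z) : D)
    rw [hzc]
    refine Finset.sum_congr rfl fun t _ => ?_
    by_cases h : X t ∈ Z
    · rw [hW t h]
      rfl
    · simp [hc t h]
  -- coefficients of e
  set c : T → F := fun t => b.repr e t with hcdef
  have hce : e = ∑ t, c t • X t := by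
    conv_lhs => rw [← b.sum_repr e]
    exact Finset.sum_congr rfl fun t _ => by rw [hb]
  have hc0 : ∀ t, X t ∉ Z → c t = 0 := by
    intro t h
    by_contra h'
    exact h (central_coeff τ X b hb hmul heZ h')
  -- σ e and its central decomposition
  have hσeZ : σ e ∈ Z := sigma_center τ X b hb hmul heZ σ
  have hσee : σ e = ∑ t, ((χ t : F) * c t) • X t := by
    rw [hce, map_sum]
    refine Finset.sum_congr rfl fun t _ => ?_
    rw [map_smul, hσX t, smul_smul, mul_comm (c t)]
  have hc0' : ∀ t, X t ∉ Z → (χ t : F) * c t = 0 := fun t h => by rw [hc0 t h, mul_zero]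
  have hσe_dec : (⟨σ e, hσeZ⟩ : Z) = ∑ t, ((χ t : F) * c t) • W t :=
    hsum _ hc0' (σ e) hσeZ hσee
  have he_dec : (⟨e, heZ⟩ : Z) = ∑ t, c t • W t := hsum c hc0 e heZ hce
  -- the key computation : lf (σ e) = 1
  have hcalc : lf ⟨σ e, hσeZ⟩ = 1 := by
    rw [hσe_dec, map_sum]
    have : ∀ t ∈ Finset.univ, lf (((χ t : F) * c t) • W t) = c t • le (W t) := by
      intro t _
      by_cases h : X t ∈ Z
      · rw [map_smul, smul_eq_mul, smul_eq_mul, mul_comm ((χ t : F)) (c t), mul_assoc,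
          hχkey t h]
      · rw [hc0 t h, mul_zero, zero_smul, map_zero, zero_smul]
    rw [Finset.sum_congr rfl this]
    have : (∑ t, c t • le (W t)) = le ⟨e, heZ⟩ := by
      rw [he_dec, map_sum]
      exact Finset.sum_congr rfl fun t _ => by rw [map_smul]
    rw [this, hle]
  -- σ e = f
  have hσe_idem : IsIdempotentElem (σ e) := by
    unfold IsIdempotentElem
    rw [← map_mul, heI]
  have hcomm : ∀ d : D, d * f = f * d := fun d => Subalgebra.mem_center_iff.mp hfZ d
  have hgZ : σ e * f ∈ Z := mul_mem hσeZ hfZ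
  have hgI : IsIdempotentElem (σ e * f) := by
    unfold IsIdempotentElem
    calc σ e * f * (σ e * f) = σ e * (f * σ e) * f := by rw [mul_assoc, mul_assoc, mul_assoc]
      _ = σ e * (σ e * f) * f := by rw [← hcomm (σ e)]
      _ = σ e * σ e * (f * f) := by rw [← mul_assoc, mul_assoc (σ e * σ e)]
      _ = σ e * f := by rw [hσe_idem, hfI]
  have hgne : σ e * f ≠ 0 := by
    intro h0
    have hzero : (⟨σ e, hσeZ⟩ * ⟨f, hfZ⟩ : Z) = 0 := Subtype.ext h0
    have : lf (⟨σ e, hσeZ⟩ * ⟨f, hfZ⟩) = 1 := by rw [map_mul, hcalc, hlf, one_mul]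
    rw [hzero, map_zero] at this
    exact zero_ne_one this
  have h1 : σ e * f = f := by
    refine ((hfM (σ e * f) hgZ hgI ?_).resolve_left hgne)
    rw [mul_assoc, hfI]
  have h2 : σ e * f = σ e := by
    have hsymZ : σ.symm (σ e * f) ∈ Z := sigma_center τ X b hb hmul hgZ σ.symm
    have hsymI : IsIdempotentElem (σ.symm (σ e * f)) := by
      unfold IsIdempotentElem
      rw [← map_mul, hgI]
    have hge : σ e * f * σ e = σ e * f := by
      calc σ e * f * σ e = σ e * (σ e * f) := by rw [mul_assoc, ← hcomm (σ e)]
        _ = σ e * σ e * f := by rw [← mul_assoc]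
        _ = σ e * f := by rw [hσe_idem]
    have hstep : σ.symm (σ e * f) * e = σ.symm (σ e * f) := by
      have h' : σ.symm (σ e * f) * σ.symm (σ e) = σ.symm ((σ e * f) * σ e) :=
        (map_mul σ.symm _ _).symm
      rw [AlgEquiv.symm_apply_apply] at h'
      rw [h', hge]
    rcases heM (σ.symm (σ e * f)) hsymZ hsymI hstep with h | h
    · exfalso
      apply hgne
      have := congrArg σ h
      rwa [AlgEquiv.apply_symm_apply, map_zero] at this
    · have := congrArg σ h
      rwa [AlgEquiv.apply_symm_apply] at this
  refine ⟨σ, h2.symm.trans h1, ?_⟩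
  intro t
  rw [Submodule.map_span]
  congr 1
  ext d
  constructor
  · rintro ⟨d', ⟨s, hs, cc, rfl⟩, rfl⟩
    refine ⟨s, hs, cc * (χ s : F), ?_⟩
    show σ.toLinearMap (cc • X s) = _
    rw [LinearMap.map_smul]
    simp only [AlgEquiv.toLinearMap_apply]
    rw [hσX s, smul_smul]
  · rintro ⟨s, hs, cc, rfl⟩
    refine ⟨(cc * (χ s : F)⁻¹) • X s, ⟨s, hs, cc * (χ s : F)⁻¹, rfl⟩, ?_⟩
    show σ.toLinearMap _ = _
    rw [LinearMap.map_smul]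
    simp only [AlgEquiv.toLinearMap_apply]
    rw [hσX s, smul_smul, mul_assoc, inv_mul_cancel₀ (Units.ne_zero (χ s)), mul_one]

end



/-- Let `D = F^τ T` be a finite-dimensional graded division algebra
over an algebraically closed field `F` (support `T`, basis `X_t`,
`X_s X_t = τ(s,t) X_{st}`), semisimple as an ungraded algebra.  Then the support
`H` of the center is precisely the radical of the commutation bicharacter
`β(s,t) = τ(s,t)/τ(t,s)` (i.e. `X_t` is central iff `τ(t,s) = τ(s,t)` for all
`s`), homogeneous elements commute up to `β`, and the simple components (cut out
by minimal central idempotents) are pairwise isomorphic as `G/H`-graded algebras: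
for any two minimal central idempotents `e, f` there is an algebra automorphism
of `D` carrying `e` to `f` and preserving each `T/H`-homogeneous component
(the span of the `X_s` with `s` in a fixed coset mod `H`). -/
theorem graded_division_algebra_semisimple_structure
    {F : Type*} [Field F] [IsAlgClosed F] {T : Type*} [CommGroup T] [Fintype T]
    {D : Type*} [Ring D] [Algebra F D] [FiniteDimensional F D]
    (τ : T → T → Fˣ) (X : T → D) (b : Module.Basis T F D) (hb : ∀ t, b t = X t)
    (hmul : ∀ s t : T, X s * X t = (τ s t : F) • X (s * t))
    (hss : IsSemisimpleRing D) :
    (∀ t : T, X t ∈ Subalgebra.center F D ↔ ∀ s : T, τ t s = τ s t) ∧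
      (∀ s t : T, X s * X t = ((τ s t : F) * (τ t s : F)⁻¹) • (X t * X s)) ∧
      ∀ e f : D,
        (e ∈ Subalgebra.center F D ∧ IsIdempotentElem e ∧ e ≠ 0 ∧
          ∀ e' : D, e' ∈ Subalgebra.center F D → IsIdempotentElem e' →
            e' * e = e' → e' = 0 ∨ e' = e) →
        (f ∈ Subalgebra.center F D ∧ IsIdempotentElem f ∧ f ≠ 0 ∧
          ∀ f' : D, f' ∈ Subalgebra.center F D → IsIdempotentElem f' →
            f' * f = f' → f' = 0 ∨ f' = f) →
        ∃ σ : D ≃ₐ[F] D, σ e = f ∧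
          ∀ t : T, Submodule.map σ.toLinearMap
              (Submodule.span F {d : D | ∃ s : T,
                X (s * t⁻¹) ∈ Subalgebra.center F D ∧ ∃ c : F, d = c • X s})
            = Submodule.span F {d : D | ∃ s : T,
                X (s * t⁻¹) ∈ Subalgebra.center F D ∧ ∃ c : F, d = c • X s} := by
  refine ⟨fun t => center_iff τ X b hb hmul t, fun s t => ?_,
    fun e f he hf => main3 τ X b hb hmul e f he hf⟩
  rw [hmul s t, hmul t s, smul_smul, mul_comm t s, mul_assoc,
    inv_mul_cancel₀ (Units.ne_zero (τ t s)), mul_one]
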